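/- arXiv:1402.1587 — 6 statements merged into one kernel-verified Lean document; each statement's English description precedes it below -/
import Mathlib

section
/- Let A and B be two independent sets of a graph G with |A| = |B| = ℓ. Then for any natural number k, there exists an (ℓ−1)-TAR-sequence from A to B of length at most 2k if and only if there exists a TJ-sequence from A to B of length at most k. -/
open Finset

variable {V : Type*}

/-- `I` is an independent set of `G`. -/
def IsIndep (G : SimpleGraph V) (I : Finset V) : Prop :=
  ∀ u ∈ I, ∀ v ∈ I, ¬ G.Adj u v

/-- One token addition or removal between independent sets of size at least `k`. -/
def TarStep [DecidableEq V] (G : SimpleGraph V) (k : ℕ) (I J : Finset V) : Prop :=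
  IsIndep G I ∧ IsIndep G J ∧ k ≤ I.card ∧ k ≤ J.card ∧
    ∃ v : V, J = insert v I ∨ I = insert v J

/-- TAR-reachability with token lower bound `k`. -/
def TarReach [DecidableEq V] (G : SimpleGraph V) (k : ℕ) (I J : Finset V) : Prop :=
  Relation.ReflTransGen (TarStep G k) I J

/-- TAR-reachability inside the subgraph of `G` induced by `S`. -/
def TarReachOn [DecidableEq V] (G : SimpleGraph V) (S : Finset V) (k : ℕ)
    (I J : Finset V) : Prop :=
  Relation.ReflTransGen (fun I J => I ⊆ S ∧ J ⊆ S ∧ TarStep G k I J) I J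

/-- A `k`-TAR-sequence of length `n`: independent sets of size at least `k`,
consecutive sets differing by at most one token addition or removal. -/
def IsTarSeq [DecidableEq V] (G : SimpleGraph V) (k n : ℕ) (f : ℕ → Finset V) : Prop :=
  (∀ i ≤ n, IsIndep G (f i) ∧ k ≤ (f i).card) ∧
  (∀ i < n, ∃ v : V, f (i + 1) = insert v (f i) ∨ f i = insert v (f (i + 1)))

/-- A TJ-sequence of length `n`: independent sets of constant size,
consecutive sets differing by one token jump. -/
def IsTJSeq [DecidableEq V] (G : SimpleGraph V) (n : ℕ) (f : ℕ → Finset V) : Prop :=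
  (∀ i ≤ n, IsIndep G (f i)) ∧ (∀ i ≤ n, (f i).card = (f 0).card) ∧
  (∀ i < n, ∃ u v : V, u ∈ f i ∧ f (i + 1) = insert v ((f i).erase u))

lemma indep_subset {G : SimpleGraph V} {I J : Finset V} (h : I ⊆ J) (hJ : IsIndep G J) :
    IsIndep G I := fun u hu v hv => hJ u (h hu) v (h hv)

lemma step_classify [DecidableEq V] {I J : Finset V}
    (h : ∃ v : V, J = insert v I ∨ I = insert v J) (hne : J ≠ I) :
    (∃ v, v ∉ I ∧ J = insert v I ∧ J.card = I.card + 1) ∨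
    (∃ v, v ∉ J ∧ I = insert v J ∧ I.card = J.card + 1) := by
  obtain ⟨v, h | h⟩ := h
  · by_cases hv : v ∈ I
    · exact absurd (h.trans (Finset.insert_eq_self.2 hv)) hne
    · exact Or.inl ⟨v, hv, h, by rw [h, card_insert_of_notMem hv]⟩
  · by_cases hv : v ∈ J
    · exact absurd (h.trans (Finset.insert_eq_self.2 hv)).symm hne
    · exact Or.inr ⟨v, hv, h, by rw [h, card_insert_of_notMem hv]⟩

lemma tj_mid [DecidableEq V] {I J : Finset V} {u v : V} (hu : u ∈ I)
    (hJ : J = insert v (I.erase u)) :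
    I = insert u (I ∩ J) ∧ J = insert v (I ∩ J) ∧ I.erase u ⊆ I ∩ J := by
  have h1 : I.erase u ⊆ I ∩ J := by
    intro x hx
    exact mem_inter.2 ⟨erase_subset u I hx, hJ ▸ mem_insert_of_mem hx⟩
  refine ⟨?_, ?_, h1⟩
  · apply Finset.Subset.antisymm
    · intro x hx
      by_cases hxu : x = u
      · exact hxu ▸ mem_insert_self _ _
      · exact mem_insert_of_mem (h1 (mem_erase.2 ⟨hxu, hx⟩))
    · intro x hx
      rcases mem_insert.1 hx with h | h
      · exact h ▸ hu
      · exact (mem_inter.1 h).1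
  · apply Finset.Subset.antisymm
    · intro x hx
      rcases mem_insert.1 (hJ ▸ hx) with h | h
      · rw [h]; exact mem_insert_self _ _
      · exact mem_insert_of_mem (h1 h)
    · intro x hx
      rcases mem_insert.1 hx with h | h
      · rw [h, hJ]; exact mem_insert_self _ _
      · exact (mem_inter.1 h).2

/-- Auxiliary function for the TJ → TAR direction. -/
def tarOfTJ [DecidableEq V] (g : ℕ → Finset V) : ℕ → Finset V :=
  fun i => if i % 2 = 0 then g (i / 2) else g (i / 2) ∩ g (i / 2 + 1)

lemma tarOfTJ_even [DecidableEq V] (g : ℕ → Finset V) (j : ℕ) :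
    tarOfTJ g (2 * j) = g j := by
  have h1 : (2 * j) % 2 = 0 := by omega
  have h2 : (2 * j) / 2 = j := by omega
  simp [tarOfTJ, h1, h2]

lemma tarOfTJ_odd [DecidableEq V] (g : ℕ → Finset V) (j : ℕ) :
    tarOfTJ g (2 * j + 1) = g j ∩ g (j + 1) := by
  have h1 : (2 * j + 1) % 2 = 1 := by omega
  have h2 : (2 * j + 1) / 2 = j := by omega
  simp [tarOfTJ, h1, h2]

/-- Key lemma: TAR implies TJ with half the length. -/
lemma tar_to_tj_key [DecidableEq V] (G : SimpleGraph V) (ℓ : ℕ) (hℓ : 1 ≤ ℓ) :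
    ∀ m (f : ℕ → Finset V), IsTarSeq G (ℓ - 1) m f → (f 0).card = ℓ → (f m).card = ℓ →
    ∃ n, 2 * n ≤ m ∧ ∃ g : ℕ → Finset V, IsTJSeq G n g ∧ g 0 = f 0 ∧ g n = f m := by
  intro m
  induction m using Nat.strong_induction_on with
  | _ m IH =>
  intro f hf h0 hm
  rcases Nat.eq_zero_or_pos m with hm0 | hm0
  · subst hm0
    refine ⟨0, by omega, f, ⟨?_, ?_, ?_⟩, rfl, rfl⟩
    · intro i hi; rw [Nat.le_zero.mp hi]; exact (hf.1 0 le_rfl).1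
    · intro i hi; rw [Nat.le_zero.mp hi]
    · intro i hi; exact absurd hi (Nat.not_lt_zero i)
  by_cases heq : ∃ j, j < m ∧ f (j + 1) = f j
  · obtain ⟨j, hjm, hfj⟩ := heq
    set g : ℕ → Finset V := fun i => if i ≤ j then f i else f (i + 1) with hgdef
    have hTar : IsTarSeq G (ℓ - 1) (m - 1) g := by
      constructor
      · intro i hi
        show IsIndep G (if i ≤ j then f i else f (i + 1)) ∧
          ℓ - 1 ≤ (if i ≤ j then f i else f (i + 1)).card
        split_ifs with h
        · exact hf.1 i (by omega)
        · exact hf.1 (i + 1) (by omega)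
      · intro i hi
        rcases lt_trichotomy i j with h | h | h
        · have e1 : g i = f i := if_pos (by omega)
          have e2 : g (i + 1) = f (i + 1) := if_pos (by omega)
          rw [e1, e2]; exact hf.2 i (by omega)
        · subst h
          have e1 : g i = f (i + 1) := by
            have : g i = f i := if_pos le_rfl
            rw [this, hfj]
          have e2 : g (i + 1) = f (i + 2) := if_neg (by omega)
          rw [e1, e2]; exact hf.2 (i + 1) (by omega)
        · have e1 : g i = f (i + 1) := if_neg (by omega)
          have e2 : g (i + 1) = f (i + 2) := if_neg (by omega)
          rw [e1, e2]; exact hf.2 (i + 1) (by omega)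
    have hg0 : g 0 = f 0 := if_pos (Nat.zero_le j)
    have hgend : g (m - 1) = f m := by
      by_cases h : m - 1 ≤ j
      · have e : g (m - 1) = f (m - 1) := if_pos h
        have hj' : j = m - 1 := by omega
        have hj2 : j + 1 = m := by omega
        rw [e, ← hj', ← hfj, hj2]
      · have e : g (m - 1) = f (m - 1 + 1) := if_neg h
        rw [e]; congr 1; omega
    obtain ⟨n, hn, g', hg', e0, en⟩ := IH (m - 1) (by omega) g hTar
      (by rw [hg0]; exact h0) (by rw [hgend]; exact hm)
    exact ⟨n, by omega, g', hg', by rw [e0, hg0], by rw [en, hgend]⟩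
  push_neg at heq
  have inner : ∀ i (f : ℕ → Finset V), IsTarSeq G (ℓ - 1) m f → (f 0).card = ℓ →
      (f m).card = ℓ → (∀ j, j < m → f (j + 1) ≠ f j) →
      (∀ j, j < i → (f j).card < (f (j + 1)).card) →
      i < m → (f (i + 1)).card < (f i).card →
      ∃ n, 2 * n ≤ m ∧ ∃ g : ℕ → Finset V, IsTJSeq G n g ∧ g 0 = f 0 ∧ g n = f m := by
    intro i
    induction i with
    | zero =>
      intro f hf h0 hm hst hup h0m hdown
      have hdown1 : (f 1).card < (f 0).card := by simpa using hdown
      have hs0 : ∃ v : V, f 1 = insert v (f 0) ∨ f 0 = insert v (f 1) := by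
        simpa using hf.2 0 h0m
      have hne0 : f 1 ≠ f 0 := by simpa using hst 0 h0m
      rcases step_classify hs0 hne0 with ⟨v, hv, hJ, hc⟩ | ⟨u, hu, hI, hc⟩
      · exfalso; omega
      have hm2 : 2 ≤ m := by
        by_contra h
        have hm1 : m = 1 := by omega
        rw [hm1] at hm
        omega
      have hs1 : ∃ v : V, f 2 = insert v (f 1) ∨ f 1 = insert v (f 2) := by
        have := hf.2 1 (by omega)
        simpa using this
      have hne1 : f 2 ≠ f 1 := by
        have := hst 1 (by omega)
        simpa using this
      rcases step_classify hs1 hne1 with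
        ⟨v, hv, hJ2, hc2⟩ | ⟨w, hw, hI2, hc2⟩
      swap
      · have := (hf.1 2 (by omega)).2
        omega
      have hf1 : f 1 = (f 0).erase u := by rw [hI, erase_insert hu]
      have hu0 : u ∈ f 0 := hI ▸ mem_insert_self u (f 1)
      have htj : f 2 = insert v ((f 0).erase u) := by rw [hJ2, hf1]
      have hc2ℓ : (f 2).card = ℓ := by omega
      have hshift : IsTarSeq G (ℓ - 1) (m - 2) (fun j => f (j + 2)) := by
        constructor
        · intro j hj; exact hf.1 (j + 2) (by omega)
        · intro j hj
          show ∃ w : V, f (j + 1 + 2) = insert w (f (j + 2)) ∨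
            f (j + 2) = insert w (f (j + 1 + 2))
          rw [show j + 1 + 2 = j + 2 + 1 from by omega]
          exact hf.2 (j + 2) (by omega)
      obtain ⟨n, hn, g, hg, e0, en⟩ := IH (m - 2) (by omega) (fun j => f (j + 2)) hshift
        (by show (f (0 + 2)).card = ℓ; exact hc2ℓ)
        (by show (f (m - 2 + 2)).card = ℓ; rw [show m - 2 + 2 = m from by omega]; exact hm)
      have e0' : g 0 = f 2 := e0
      have en' : g n = f m := by
        have : g n = f (m - 2 + 2) := en
        rw [this]; congr 1; omega
      refine ⟨n + 1, by omega, fun j => if j = 0 then f 0 else g (j - 1), ⟨?_, ?_, ?_⟩,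
        if_pos rfl, ?_⟩
      · intro j hj
        show IsIndep G (if j = 0 then f 0 else g (j - 1))
        split_ifs with h
        · exact (hf.1 0 (by omega)).1
        · exact hg.1 (j - 1) (by omega)
      · intro j hj
        have hc0 : ∀ j' ≤ n, (g j').card = ℓ := by
          intro j' hj'
          rw [hg.2.1 j' hj', e0', hc2ℓ]
        show (if j = 0 then f 0 else g (j - 1)).card = (if (0:ℕ) = 0 then f 0 else g (0 - 1)).card
        rw [if_pos rfl]
        split_ifs with h
        · rfl
        · rw [hc0 (j - 1) (by omega), h0]
      · intro j hj
        by_cases h : j = 0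
        · subst h
          refine ⟨u, v, ?_, ?_⟩
          · show u ∈ (if (0:ℕ) = 0 then f 0 else g (0 - 1))
            rw [if_pos rfl]; exact hu0
          · show (if (1:ℕ) = 0 then f 0 else g (1 - 1)) =
              insert v ((if (0:ℕ) = 0 then f 0 else g (0 - 1)).erase u)
            rw [if_pos rfl, if_neg one_ne_zero]
            show g 0 = insert v ((f 0).erase u)
            rw [e0']; exact htj
        · obtain ⟨j', rfl⟩ : ∃ j', j = j' + 1 := ⟨j - 1, by omega⟩
          obtain ⟨u', v', hu', hstep'⟩ := hg.2.2 j' (by omega)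
          refine ⟨u', v', ?_, ?_⟩
          · show u' ∈ (if j' + 1 = 0 then f 0 else g (j' + 1 - 1))
            rw [if_neg (Nat.succ_ne_zero j')]; exact hu'
          · show (if j' + 1 + 1 = 0 then f 0 else g (j' + 1 + 1 - 1)) =
              insert v' ((if j' + 1 = 0 then f 0 else g (j' + 1 - 1)).erase u')
            rw [if_neg (Nat.succ_ne_zero _), if_neg (Nat.succ_ne_zero j')]
            exact hstep'
      · show (if n + 1 = 0 then f 0 else g (n + 1 - 1)) = f m
        rw [if_neg (Nat.succ_ne_zero n)]
        exact en'
    | succ i ih =>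
      intro f hf h0 hm hst hup him hdown
      obtain ⟨a, ha, hai, hca⟩ : ∃ a, a ∉ f i ∧ f (i + 1) = insert a (f i) ∧
          (f (i + 1)).card = (f i).card + 1 := by
        rcases step_classify (hf.2 i (by omega)) (hst i (by omega)) with
          ⟨a, ha, h1, h2⟩ | ⟨a, ha, h1, h2⟩
        · exact ⟨a, ha, h1, h2⟩
        · have := hup i (by omega); omega
      obtain ⟨b, hb, hbi, hcb⟩ : ∃ b, b ∉ f (i + 2) ∧ f (i + 1) = insert b (f (i + 2)) ∧
          (f (i + 1)).card = (f (i + 2)).card + 1 := by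
        rcases step_classify (hf.2 (i + 1) him) (hst (i + 1) him) with
          ⟨c, hc', h1, h2⟩ | ⟨c, hc', h1, h2⟩
        · omega
        · exact ⟨c, hc', h1, h2⟩
      have hfi2 : f (i + 2) = (f (i + 1)).erase b := by rw [hbi, erase_insert hb]
      by_cases hab : b = a
      · subst hab
        have hif : f (i + 2) = f i := by rw [hfi2, hai, erase_insert ha]
        set g : ℕ → Finset V := fun j => if j ≤ i then f j else f (j + 2) with hgdef
        have hTar : IsTarSeq G (ℓ - 1) (m - 2) g := by
          constructor
          · intro j hj
            show IsIndep G (if j ≤ i then f j else f (j + 2)) ∧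
              ℓ - 1 ≤ (if j ≤ i then f j else f (j + 2)).card
            split_ifs with h
            · exact hf.1 j (by omega)
            · exact hf.1 (j + 2) (by omega)
          · intro j hj
            rcases lt_trichotomy j i with h | h | h
            · have e1 : g j = f j := if_pos (by omega)
              have e2 : g (j + 1) = f (j + 1) := if_pos (by omega)
              rw [e1, e2]; exact hf.2 j (by omega)
            · subst h
              have e1 : g j = f j := if_pos le_rfl
              have e2 : g (j + 1) = f (j + 1 + 2) := if_neg (by omega)
              rw [e1, e2, show j + 1 + 2 = j + 2 + 1 from by omega]
              have e3 := hf.2 (j + 2) (by omega)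
              rw [hif] at e3
              exact e3
            · have e1 : g j = f (j + 2) := if_neg (by omega)
              have e2 : g (j + 1) = f (j + 1 + 2) := if_neg (by omega)
              rw [e1, e2, show j + 1 + 2 = j + 2 + 1 from by omega]
              exact hf.2 (j + 2) (by omega)
        have hg0 : g 0 = f 0 := if_pos (Nat.zero_le i)
        have hgend : g (m - 2) = f m := by
          by_cases h : m - 2 ≤ i
          · have e : g (m - 2) = f (m - 2) := if_pos h
            have hi' : i = m - 2 := by omega
            rw [e, ← hi', ← hif]
            congr 1; omega
          · have e : g (m - 2) = f (m - 2 + 2) := if_neg h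
            rw [e]; congr 1; omega
        obtain ⟨n, hn, g', hg', e0, en⟩ := IH (m - 2) (by omega) g hTar
          (by rw [hg0]; exact h0) (by rw [hgend]; exact hm)
        exact ⟨n, by omega, g', hg', by rw [e0, hg0], by rw [en, hgend]⟩
      · have hbfi : b ∈ f i := by
          have hb1 : b ∈ f (i + 1) := hbi ▸ mem_insert_self b (f (i + 2))
          rw [hai] at hb1
          rcases mem_insert.1 hb1 with h | h
          · exact absurd h hab
          · exact h
        have hcfi : ℓ ≤ (f i).card := by
          have hgrow : ∀ j, j ≤ i → ℓ + j ≤ (f j).card := by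
            intro j
            induction j with
            | zero => intro _; omega
            | succ j ihj =>
              intro hji
              have h1 := ihj (by omega)
              have h2 := hup j (by omega)
              omega
          have := hgrow i le_rfl; omega
        set g : ℕ → Finset V := fun j => if j = i + 1 then (f i).erase b else f j with hgdef
        have hgi1 : g (i + 1) = (f i).erase b := if_pos rfl
        have hgo : ∀ j, j ≠ i + 1 → g j = f j := fun j h => if_neg h
        have hcerase : ((f i).erase b).card = (f i).card - 1 := card_erase_of_mem hbfi
        have hTar : IsTarSeq G (ℓ - 1) m g := by
          constructor
          · intro j hj
            by_cases h : j = i + 1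
            · rw [h, hgi1]
              refine ⟨indep_subset (erase_subset b (f i)) (hf.1 i (by omega)).1, ?_⟩
              rw [hcerase]; omega
            · rw [hgo j h]; exact hf.1 j hj
          · intro j hj
            by_cases h1 : j = i
            · subst h1
              rw [hgo j (by omega), hgi1]
              exact ⟨b, Or.inr (insert_erase hbfi).symm⟩
            by_cases h2 : j = i + 1
            · subst h2
              rw [hgi1, hgo (i + 1 + 1) (by omega)]
              refine ⟨a, Or.inl ?_⟩
              rw [show i + 1 + 1 = i + 2 from rfl, hfi2, hai]
              exact erase_insert_of_ne (Ne.symm hab)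
            · rw [hgo (j + 1) (fun hE => h1 (by omega)), hgo j h2]
              exact hf.2 j hj
        obtain ⟨n, hn, g', hg', e0, en⟩ := ih g hTar
          (by rw [hgo 0 (by omega)]; exact h0)
          (by rw [hgo m (by omega)]; exact hm)
          (by
            intro j hj
            by_cases h1 : j = i
            · subst h1
              rw [hgi1, hgo j (by omega)]
              intro hE
              have : b ∈ (f j).erase b := hE.symm ▸ hbfi
              exact (notMem_erase b (f j)) this
            by_cases h2 : j = i + 1
            · subst h2
              rw [hgo (i + 1 + 1) (by omega), hgi1]
              intro hE
              have haf2 : a ∈ f (i + 1 + 1) := by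
                rw [show i + 1 + 1 = i + 2 from rfl, hfi2]
                exact mem_erase.2 ⟨Ne.symm hab, hai ▸ mem_insert_self a (f i)⟩
              rw [hE] at haf2
              exact ha (mem_of_mem_erase haf2)
            · rw [hgo (j + 1) (fun hE => h1 (by omega)), hgo j h2]
              exact hst j hj)
          (by
            intro j hj
            rw [hgo j (by omega), hgo (j + 1) (by omega)]
            exact hup j (by omega))
          (by omega)
          (by
            rw [hgi1, hgo i (by omega), hcerase]
            have : 0 < (f i).card := card_pos.2 ⟨b, hbfi⟩
            omega)
        exact ⟨n, hn, g', hg', by rw [e0, hgo 0 (by omega)], by rw [en, hgo m (by omega)]⟩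
  classical
  have hex : ∃ i, i < m ∧ (f (i + 1)).card < (f i).card := by
    by_contra hno
    push_neg at hno
    have hgrow : ∀ j, j ≤ m → ℓ + j ≤ (f j).card := by
      intro j
      induction j with
      | zero => intro _; omega
      | succ j ihj =>
        intro hj
        have h1 := ihj (by omega)
        have h3 := hno j (by omega)
        rcases step_classify (hf.2 j (by omega)) (heq j (by omega)) with
          ⟨v, _, _, h2⟩ | ⟨v, _, _, h2⟩
        · omega
        · omega
    have := hgrow m le_rfl
    omega
  obtain hspec := Nat.find_spec hex
  refine inner (Nat.find hex) f hf h0 hm heq ?_ hspec.1 hspec.2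
  intro j hj
  have h1 := Nat.find_min hex hj
  have hjm : j < m := by omega
  rcases step_classify (hf.2 j hjm) (heq j hjm) with ⟨v, _, _, h2⟩ | ⟨v, _, _, h2⟩
  · omega
  · exfalso; exact h1 ⟨hjm, by omega⟩

/-- Kamiński, Medvedev and Milanič: for independent sets `A`, `B` of size `ℓ`,
there is an `(ℓ-1)`-TAR-sequence from `A` to `B` of length at most `2k` iff
there is a TJ-sequence from `A` to `B` of length at most `k`. -/
theorem tar_iff_tj [DecidableEq V] (G : SimpleGraph V) (A B : Finset V) (ℓ : ℕ)
    (hA : IsIndep G A) (hB : IsIndep G B) (hcA : A.card = ℓ) (hcB : B.card = ℓ)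
    (k : ℕ) :
    (∃ m ≤ 2 * k, ∃ f : ℕ → Finset V,
        IsTarSeq G (ℓ - 1) m f ∧ f 0 = A ∧ f m = B) ↔
    (∃ m ≤ k, ∃ f : ℕ → Finset V, IsTJSeq G m f ∧ f 0 = A ∧ f m = B) := by
  constructor
  · rintro ⟨m, hmk, f, hf, hf0, hfm⟩
    rcases Nat.eq_zero_or_pos ℓ with hℓ0 | hℓ
    · have hA0 : A = ∅ := card_eq_zero.1 (by omega)
      have hB0 : B = ∅ := card_eq_zero.1 (by omega)
      refine ⟨0, Nat.zero_le k, fun _ => ∅, ⟨?_, ?_, ?_⟩, hA0.symm, hB0.symm⟩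
      · intro i _ u hu
        exact absurd hu (notMem_empty u)
      · intro i _; rfl
      · intro i hi; exact absurd hi (Nat.not_lt_zero i)
    · obtain ⟨n, hn, g, hg, hg0, hgn⟩ := tar_to_tj_key G ℓ hℓ m f hf
        (by rw [hf0]; exact hcA) (by rw [hfm]; exact hcB)
      exact ⟨n, by omega, g, hg, by rw [hg0, hf0], by rw [hgn, hfm]⟩
  · rintro ⟨n, hnk, g, hg, hg0, hgn⟩
    have hcards : ∀ j ≤ n, (g j).card = ℓ := fun j hj => by
      rw [hg.2.1 j hj, hg0, hcA]
    refine ⟨2 * n, by omega, tarOfTJ g, ⟨?_, ?_⟩, ?_, ?_⟩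
    · intro i hi
      obtain ⟨j, hj | hj⟩ : ∃ j, i = 2 * j ∨ i = 2 * j + 1 := ⟨i / 2, by omega⟩
      · subst hj
        rw [tarOfTJ_even]
        refine ⟨hg.1 j (by omega), ?_⟩
        rw [hcards j (by omega)]
        omega
      · subst hj
        rw [tarOfTJ_odd]
        have hjn : j < n := by omega
        obtain ⟨u, v, hu, hstep⟩ := hg.2.2 j hjn
        obtain ⟨hI, hJ, hsub⟩ := tj_mid hu hstep
        refine ⟨indep_subset inter_subset_left (hg.1 j (by omega)), ?_⟩
        have h1 := card_le_card hsub
        rw [card_erase_of_mem hu] at h1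
        have h2 := hcards j (by omega)
        omega
    · intro i hi
      obtain ⟨j, hj | hj⟩ : ∃ j, i = 2 * j ∨ i = 2 * j + 1 := ⟨i / 2, by omega⟩
      · subst hj
        have hjn : j < n := by omega
        obtain ⟨u, v, hu, hstep⟩ := hg.2.2 j hjn
        obtain ⟨hI, hJ, hsub⟩ := tj_mid hu hstep
        rw [tarOfTJ_even, tarOfTJ_odd]
        exact ⟨u, Or.inr hI⟩
      · subst hj
        have hjn : j < n := by omega
        obtain ⟨u, v, hu, hstep⟩ := hg.2.2 j hjn
        obtain ⟨hI, hJ, hsub⟩ := tj_mid hu hstep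
        rw [tarOfTJ_odd, show 2 * j + 1 + 1 = 2 * (j + 1) from by omega, tarOfTJ_even]
        exact ⟨v, Or.inl hJ⟩
    · show tarOfTJ g 0 = A
      rw [show (0 : ℕ) = 2 * 0 from rfl, tarOfTJ_even]
      exact hg0
    · rw [tarOfTJ_even]
      exact hgn
end

section
/- Let M be a module of a graph G, let k and y be integers, and let A be an independent set of G with |A ∩ M| ≥ max{1, y} and |A| ≥ k. Let H = G[M]. If there exists an independent set B of G with A TAR_k-reachable to B and |B ∩ M| ≤ y, and there exists an independent set C of H with (A ∩ M) TAR_y-reachable (in H) to C, then there exists an independent set D of G with A TAR_k-reachable to D and D ∩ M = C. -/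
open Finset

variable {V : Type*}

/-- `M` is a module of `G`: every vertex outside `M` is adjacent to all of `M`
or to none of `M`. -/
def IsModule (G : SimpleGraph V) (M : Finset V) : Prop :=
  ∀ v ∉ M, (∀ u ∈ M, G.Adj v u) ∨ (∀ u ∈ M, ¬ G.Adj v u)

private lemma isIndep_subset {G : SimpleGraph V} {I J : Finset V}
    (h : IsIndep G J) (hIJ : I ⊆ J) : IsIndep G I :=
  fun u hu v hv => h u (hIJ hu) v (hIJ hv)

private lemma tarReachOn_symm [DecidableEq V] {G : SimpleGraph V} {M : Finset V} {y : ℕ}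
    {I J : Finset V} (h : TarReachOn G M y I J) : TarReachOn G M y J I := by
  have hs : Symmetric (fun I J : Finset V => I ⊆ M ∧ J ⊆ M ∧ TarStep G y I J) := by
    rintro I J ⟨h1, h2, h3, h4, h5, h6, v, hv⟩
    exact ⟨h2, h1, h4, h3, h6, h5, v, hv.symm⟩
  exact (@Relation.ReflTransGen.stdSymm _ _ ⟨fun a b => @hs a b⟩).symm _ _ h

private lemma tarReachOn_subset [DecidableEq V] {G : SimpleGraph V} {M : Finset V} {y : ℕ}
    {L C : Finset V} (h : TarReachOn G M y L C) (hL : L ⊆ M) : C ⊆ M := by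
  induction h with
  | refl => exact hL
  | tail _ step _ => exact step.2.1

/-- Lifting a TAR path inside `M` to a TAR path in `G` by adding a fixed set `N`
disjoint from `M` whose vertices are non-adjacent to all of `M`. -/
private lemma tarReach_lift [DecidableEq V] {G : SimpleGraph V} {M : Finset V} {k y : ℕ}
    {N L L' : Finset V} (hNM : ∀ u ∈ N, u ∉ M) (hNind : IsIndep G N)
    (hNadj : ∀ u ∈ N, ∀ m ∈ M, ¬ G.Adj u m) (hcard : k ≤ N.card + y)
    (h : TarReachOn G M y L L') : TarReach G k (N ∪ L) (N ∪ L') := by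
  have indep_union : ∀ X : Finset V, X ⊆ M → IsIndep G X → IsIndep G (N ∪ X) := by
    intro X hXM hXi u hu w hw
    rcases mem_union.mp hu with hu | hu <;> rcases mem_union.mp hw with hw | hw
    · exact hNind u hu w hw
    · exact hNadj u hu w (hXM hw)
    · exact fun hadj => hNadj w hw u (hXM hu) hadj.symm
    · exact hXi u hu w hw
  have card_union : ∀ X : Finset V, X ⊆ M → y ≤ X.card → k ≤ (N ∪ X).card := by
    intro X hXM hyX
    have hdisj : Disjoint N X := disjoint_left.mpr (fun a ha hb => hNM a ha (hXM hb))
    rw [card_union_of_disjoint hdisj]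
    exact le_trans hcard (by omega)
  induction h with
  | refl => exact Relation.ReflTransGen.refl
  | tail _ step ih =>
    obtain ⟨hLM, hL'M, hLi, hL'i, hLc, hL'c, v, hv⟩ := step
    refine ih.tail ⟨indep_union _ hLM hLi, indep_union _ hL'M hL'i,
      card_union _ hLM hLc, card_union _ hL'M hL'c, v, ?_⟩
    rcases hv with hv | hv
    · exact Or.inl (by rw [hv, union_insert])
    · exact Or.inr (by rw [hv, union_insert])

/-- Module Lemma A. -/
theorem module_lemma_A [DecidableEq V] (G : SimpleGraph V) (M : Finset V)
    (hM : IsModule G M) (k y : ℕ) (A : Finset V) (hA : IsIndep G A)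
    (hAM : max 1 y ≤ (A ∩ M).card) (hAk : k ≤ A.card)
    (hB : ∃ B : Finset V, TarReach G k A B ∧ (B ∩ M).card ≤ y)
    (C : Finset V) (hC : TarReachOn G M y (A ∩ M) C) :
    ∃ D : Finset V, TarReach G k A D ∧ D ∩ M = C := by
  classical
  obtain ⟨B, hAB, hBy⟩ := hB
  have h1y : 1 ≤ (A ∩ M).card := le_trans (le_max_left 1 y) hAM
  have hyA : y ≤ (A ∩ M).card := le_trans (le_max_right 1 y) hAM
  -- Good J: J is reachable, |J ∩ M| = y, all of J outside M is non-adjacent to M,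
  -- and A ∩ M reaches J ∩ M inside M.
  have key : ∃ J : Finset V, TarReach G k A J ∧ IsIndep G J ∧ k ≤ J.card ∧
      (J ∩ M).card = y ∧ (∀ u ∈ J, u ∉ M → ∀ m ∈ M, ¬ G.Adj u m) ∧
      TarReachOn G M y (A ∩ M) (J ∩ M) := by
    have main : ∀ X : Finset V, TarReach G k A X →
        (IsIndep G X ∧ k ≤ X.card ∧ y < (X ∩ M).card ∧
          TarReachOn G M y (A ∩ M) (X ∩ M)) ∨
        (∃ J : Finset V, TarReach G k A J ∧ IsIndep G J ∧ k ≤ J.card ∧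
          (J ∩ M).card = y ∧ (∀ u ∈ J, u ∉ M → ∀ m ∈ M, ¬ G.Adj u m) ∧
          TarReachOn G M y (A ∩ M) (J ∩ M)) := by
      intro X hX
      induction hX with
      | refl =>
        by_cases hy : y < (A ∩ M).card
        · exact Or.inl ⟨hA, hAk, hy, Relation.ReflTransGen.refl⟩
        · -- then |A ∩ M| = y, and A itself is good
          have heq : (A ∩ M).card = y := le_antisymm (not_lt.mp hy) hyA
          refine Or.inr ⟨A, Relation.ReflTransGen.refl, hA, hAk, heq, ?_,
            Relation.ReflTransGen.refl⟩
          intro u hu huM m hm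
          obtain ⟨w, hw⟩ := card_pos.mp h1y
          rcases hM u huM with hall | hnone
          · exact absurd (hall w (mem_of_mem_inter_right hw))
              (hA u hu w (mem_of_mem_inter_left hw))
          · exact hnone m hm
      | @tail X X' hAX hstep ih =>
        rcases ih with ⟨hXi, hXc, hym, hXr⟩ | hGood
        · obtain ⟨hXi', hX'i, hXc', hX'c, v, hv⟩ := hstep
          by_cases hy : y < (X' ∩ M).card
          · -- invariant is maintained
            refine Or.inl ⟨hX'i, hX'c, hy, ?_⟩
            by_cases hvM : v ∈ M
            · refine hXr.tail ⟨inter_subset_right, inter_subset_right,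
                isIndep_subset hXi inter_subset_left,
                isIndep_subset hX'i inter_subset_left,
                le_of_lt hym, le_of_lt hy, v, ?_⟩
              rcases hv with hv | hv
              · exact Or.inl (by rw [hv, insert_inter_of_mem hvM])
              · exact Or.inr (by rw [hv, insert_inter_of_mem hvM])
            · have heq : X' ∩ M = X ∩ M := by
                rcases hv with hv | hv
                · rw [hv, insert_inter_of_notMem hvM]
                · rw [hv, insert_inter_of_notMem hvM]
              rw [heq]; exact hXr
          · -- the intersection dropped to exactly y: X' is good
            have hlt : (X' ∩ M).card < (X ∩ M).card :=
              lt_of_le_of_lt (not_lt.mp hy) hym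
            have hvX : X = insert v X' := by
              rcases hv with hv | hv
              · exact absurd (card_le_card (inter_subset_inter
                  (hv ▸ subset_insert v X) (Finset.Subset.refl M))) (not_le.mpr hlt)
              · exact hv
            have hvM : v ∈ M := by
              by_contra hvM
              rw [hvX, insert_inter_of_notMem hvM] at hlt
              exact lt_irrefl _ hlt
            have hXM : X ∩ M = insert v (X' ∩ M) := by
              rw [hvX, insert_inter_of_mem hvM]
            have hcard1 : (X ∩ M).card ≤ (X' ∩ M).card + 1 := by
              rw [hXM]; exact card_insert_le _ _
            have heqy : (X' ∩ M).card = y := by omega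
            have hvmemX : v ∈ X := by rw [hvX]; exact mem_insert_self v X'
            refine Or.inr ⟨X', hAX.tail ⟨hXi', hX'i, hXc', hX'c, v, hv⟩,
              hX'i, hX'c, heqy, ?_, ?_⟩
            · intro u hu huM m hm
              have huX : u ∈ X := by rw [hvX]; exact mem_insert_of_mem hu
              rcases hM u huM with hall | hnone
              · exact absurd (hall v hvM) (hXi u huX v hvmemX)
              · exact hnone m hm
            · refine hXr.tail ⟨inter_subset_right, inter_subset_right,
                isIndep_subset hXi inter_subset_left,
                isIndep_subset hX'i inter_subset_left,
                le_of_lt hym, le_of_eq heqy.symm, v, Or.inr hXM⟩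
        · exact Or.inr hGood
    rcases main B hAB with ⟨_, _, hlt, _⟩ | hGood
    · exact absurd hBy (not_le.mpr hlt)
    · exact hGood
  obtain ⟨J, hAJ, hJi, hJc, hJy, hJadj, hJr⟩ := key
  set N : Finset V := J \ M with hN
  have hNM : ∀ u ∈ N, u ∉ M := fun u hu => (mem_sdiff.mp hu).2
  have hNind : IsIndep G N := isIndep_subset hJi sdiff_subset
  have hNadj : ∀ u ∈ N, ∀ m ∈ M, ¬ G.Adj u m := by
    intro u hu m hm
    exact hJadj u (mem_sdiff.mp hu).1 (mem_sdiff.mp hu).2 m hm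
  have hcard : k ≤ N.card + y := by
    have h2 := Finset.card_inter_add_card_sdiff J M
    have h3 : N.card = (J \ M).card := by rw [hN]
    omega
  have hpath : TarReachOn G M y (J ∩ M) C := (tarReachOn_symm hJr).trans hC
  have hreach : TarReach G k (N ∪ (J ∩ M)) (N ∪ C) :=
    tarReach_lift hNM hNind hNadj hcard hpath
  have hJeq : N ∪ (J ∩ M) = J := by
    rw [hN]; exact sdiff_union_inter J M
  have hCM : C ⊆ M := tarReachOn_subset hC inter_subset_right
  refine ⟨N ∪ C, hAJ.trans (hJeq ▸ hreach), ?_⟩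
  rw [union_inter_distrib_right, sdiff_inter_self, inter_eq_left.mpr hCM, empty_union]
end

section
/- Let M be a module of a graph G that can be partitioned into two sets M₁ and M₂ with no edges between M₁ and M₂. Let A be an independent set of G, let B₁ be an independent set with A TAR_k-reachable to B₁ maximizing |B₁ ∩ M₁| among all TAR_k-reachable sets, and let B₂ be any independent set with A TAR_k-reachable to B₂. Then there exists an independent set C of G with A TAR_k-reachable to C, C ∩ M₁ = B₁ ∩ M₁, and C ∩ M₂ = B₂ ∩ M₂. -/
open Finset

variable {V : Type*}

private lemma indep_mono {G : SimpleGraph V} {S T : Finset V} (h : IsIndep G T)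
    (hST : S ⊆ T) : IsIndep G S := fun u hu v hv => h u (hST hu) v (hST hv)

private lemma tarStep_symm [DecidableEq V] {G : SimpleGraph V} {k : ℕ} {I J : Finset V}
    (h : TarStep G k I J) : TarStep G k J I := by
  obtain ⟨h1, h2, h3, h4, v, h5⟩ := h
  exact ⟨h2, h1, h4, h3, v, h5.symm⟩

private lemma tarReach_symm [DecidableEq V] {G : SimpleGraph V} {k : ℕ} {I J : Finset V}
    (h : TarReach G k I J) : TarReach G k J I := by
  induction h with
  | refl => exact Relation.ReflTransGen.refl
  | tail _ hstep ih => exact Relation.ReflTransGen.head (tarStep_symm hstep) ih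

private lemma indep_of_reach [DecidableEq V] {G : SimpleGraph V} {k : ℕ} {A I : Finset V}
    (hA : IsIndep G A) (h : TarReach G k A I) : IsIndep G I := by
  induction h with
  | refl => exact hA
  | tail _ hstep _ => exact hstep.2.1

private lemma reach_union [DecidableEq V] {G : SimpleGraph V} {k : ℕ} {C : Finset V}
    (S : Finset V) (hind : IsIndep G (C ∪ S)) (hcard : k ≤ C.card) :
    TarReach G k C (C ∪ S) := by
  classical
  induction S using Finset.induction_on with
  | empty => rw [Finset.union_empty]; exact Relation.ReflTransGen.refl
  | @insert a S ha ih =>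
    have hsub : C ∪ S ⊆ C ∪ insert a S :=
      Finset.union_subset_union_right (Finset.subset_insert a S)
    have h1 : IsIndep G (C ∪ S) := indep_mono hind hsub
    refine Relation.ReflTransGen.tail (ih h1) ?_
    refine ⟨h1, hind, le_trans hcard (Finset.card_le_card Finset.subset_union_left),
      le_trans hcard (Finset.card_le_card Finset.subset_union_left), a, Or.inl ?_⟩
    rw [Finset.union_insert]

/-- Module Lemma B. -/
theorem module_lemma_B [DecidableEq V] (G : SimpleGraph V) (M M₁ M₂ : Finset V)
    (hM : IsModule G M) (hpart : M₁ ∪ M₂ = M) (hdisj : Disjoint M₁ M₂)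
    (hsep : ∀ a ∈ M₁, ∀ b ∈ M₂, ¬ G.Adj a b)
    (k : ℕ) (A : Finset V) (hA : IsIndep G A)
    (B₁ : Finset V) (hB₁ : TarReach G k A B₁)
    (hmax : ∀ B : Finset V, TarReach G k A B → (B ∩ M₁).card ≤ (B₁ ∩ M₁).card)
    (B₂ : Finset V) (hB₂ : TarReach G k A B₂) :
    ∃ C : Finset V, TarReach G k A C ∧ C ∩ M₁ = B₁ ∩ M₁ ∧ C ∩ M₂ = B₂ ∩ M₂ := by
  classical
  have hM₁M : M₁ ⊆ M := hpart ▸ Finset.subset_union_left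
  have hM₂M : M₂ ⊆ M := hpart ▸ Finset.subset_union_right
  have cardsplit : ∀ X : Finset V,
      X.card = (X ∩ M₁).card + (X ∩ M₂).card + (X \ M).card := by
    intro X
    have h1 : X ∩ M = (X ∩ M₁) ∪ (X ∩ M₂) := by
      rw [← Finset.inter_union_distrib_left, hpart]
    have h2 : (X ∩ M).card + (X \ M).card = X.card := Finset.card_inter_add_card_sdiff X M
    rw [← h2, h1,
      Finset.card_union_of_disjoint (hdisj.mono Finset.inter_subset_right
        Finset.inter_subset_right)]
  -- cardinality comparison
  have cardge : ∀ J D : Finset V, TarReach G k A J → D ∩ M₁ = B₁ ∩ M₁ →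
      D ∩ M₂ = J ∩ M₂ → D \ M = J \ M → J.card ≤ D.card := by
    intro J D hJ e1 e2 e3
    have hm := hmax J hJ
    rw [cardsplit D, cardsplit J, e1, e2, e3]
    omega
  have hcomm : ∀ (S : Finset V) (w : V), S.erase w \ M = (S \ M).erase w := by
    intro S w
    ext x
    simp only [Finset.mem_erase, Finset.mem_sdiff]
    tauto
  have hpath : Relation.ReflTransGen (TarStep G k) B₁ B₂ :=
    Relation.ReflTransGen.trans (tarReach_symm hB₁) hB₂
  suffices h : TarReach G k A B₂ ∧ ∃ C, TarReach G k A C ∧ C ∩ M₁ = B₁ ∩ M₁ ∧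
      C ∩ M₂ = B₂ ∩ M₂ ∧ ((∃ z ∈ B₂, z ∉ M ∧ ∃ u ∈ M, G.Adj z u) ∨ C \ M = B₂ \ M) by
    obtain ⟨-, C, h1, h2, h3, -⟩ := h
    exact ⟨C, h1, h2, h3⟩
  clear hB₂
  induction hpath with
  | refl => exact ⟨hB₁, B₁, hB₁, rfl, rfl, Or.inr rfl⟩
  | @tail b c hpath hstep ih =>
    obtain ⟨hreachb, C, hCreach, hC1, hC2, hCd⟩ := ih
    have hreachc : TarReach G k A c := Relation.ReflTransGen.tail hreachb hstep
    refine ⟨hreachc, ?_⟩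
    obtain ⟨hIb, hIc, hkb, hkc, v, hv⟩ := hstep
    have hCind : IsIndep G C := indep_of_reach hA hCreach
    rcases hv with hvc | hvb
    · -- addition : c = insert v b
      by_cases hvIn : v ∈ b
      · have hcb : c = b := by rw [hvc, Finset.insert_eq_self.mpr hvIn]
        exact ⟨C, hCreach, hC1, hcb ▸ hC2, hcb ▸ hCd⟩
      · by_cases hvM : v ∈ M
        · -- v ∈ M : b has no blockers, C is clean
          have hclean : ¬ ∃ z ∈ b, z ∉ M ∧ ∃ u ∈ M, G.Adj z u := by
            rintro ⟨z, hzb, hzM, u, huM, hadj⟩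
            rcases hM z hzM with hall | hnone
            · exact hIc z (hvc ▸ Finset.mem_insert_of_mem hzb)
                v (hvc ▸ Finset.mem_insert_self v b) (hall v hvM)
            · exact hnone u huM hadj
          have hCeq : C \ M = b \ M := hCd.resolve_left hclean
          by_cases hvM₁ : v ∈ M₁
          · -- skip
            have hvM₂ : v ∉ M₂ := fun h => Finset.disjoint_left.mp hdisj hvM₁ h
            refine ⟨C, hCreach, hC1, ?_, Or.inr ?_⟩
            · rw [hC2, hvc, Finset.insert_inter_of_notMem hvM₂]
            · rw [hCeq, hvc, Finset.insert_sdiff_of_mem b hvM]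
          · -- v ∈ M₂ : mirror the addition
            have hvM₂ : v ∈ M₂ := by
              have : v ∈ M₁ ∪ M₂ := hpart ▸ hvM
              exact (Finset.mem_union.mp this).resolve_left hvM₁
            have hvC : v ∉ C := by
              intro h
              exact hvIn (Finset.mem_inter.mp (hC2 ▸ Finset.mem_inter.mpr ⟨h, hvM₂⟩)).1
            have hCb : ∀ w ∈ C, w ∉ M₁ → w ∈ b := by
              intro w hw hwM₁
              by_cases hwM₂ : w ∈ M₂
              · exact (Finset.mem_inter.mp (hC2 ▸ Finset.mem_inter.mpr ⟨hw, hwM₂⟩)).1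
              · have hwM : w ∉ M := by
                  intro h
                  rcases Finset.mem_union.mp (hpart ▸ h : w ∈ M₁ ∪ M₂) with h | h
                  exacts [hwM₁ h, hwM₂ h]
                exact (Finset.mem_sdiff.mp (hCeq ▸ Finset.mem_sdiff.mpr ⟨hw, hwM⟩)).1
            have hvnon : ∀ w ∈ C, ¬ G.Adj v w := by
              intro w hw
              by_cases hwM₁ : w ∈ M₁
              · exact fun h => hsep w hwM₁ v hvM₂ h.symm
              · exact hIc v (hvc ▸ Finset.mem_insert_self v b)
                  w (hvc ▸ Finset.mem_insert_of_mem (hCb w hw hwM₁))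
            have hind' : IsIndep G (insert v C) := by
              intro x hx y hy
              rcases Finset.mem_insert.mp hx with hx' | hx'
              · subst hx'
                rcases Finset.mem_insert.mp hy with hy' | hy'
                · subst hy'; exact fun h => G.irrefl h
                · exact hvnon y hy'
              · rcases Finset.mem_insert.mp hy with hy' | hy'
                · subst hy'; exact fun h => hvnon x hx' h.symm
                · exact hCind x hx' y hy'
            have kC : k ≤ C.card := le_trans hkb (cardge b C hreachb hC1 hC2 hCeq)
            have hstep' : TarStep G k C (insert v C) :=
              ⟨hCind, hind', kC, le_trans kC (Finset.card_le_card (Finset.subset_insert v C)),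
                v, Or.inl rfl⟩
            refine ⟨insert v C, Relation.ReflTransGen.tail hCreach hstep', ?_, ?_, Or.inr ?_⟩
            · rw [Finset.insert_inter_of_notMem
                (fun h => Finset.disjoint_left.mp hdisj h hvM₂), hC1]
            · rw [Finset.insert_inter_of_mem hvM₂, hC2, hvc, Finset.insert_inter_of_mem hvM₂]
            · rw [Finset.insert_sdiff_of_mem C hvM, hCeq, hvc, Finset.insert_sdiff_of_mem b hvM]
        · -- v ∉ M
          by_cases hvblk : ∃ u ∈ M, G.Adj v u
          · -- blocker added : freeze
            refine ⟨C, hCreach, hC1, ?_,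
              Or.inl ⟨v, hvc ▸ Finset.mem_insert_self v b, hvM, hvblk⟩⟩
            rw [hC2, hvc, Finset.insert_inter_of_notMem (fun h => hvM (hM₂M h))]
          · rcases hCd with hblk | hCeq
            · -- blockers remain : freeze
              obtain ⟨z, hzb, hz⟩ := hblk
              refine ⟨C, hCreach, hC1, ?_,
                Or.inl ⟨z, hvc ▸ Finset.mem_insert_of_mem hzb, hz⟩⟩
              rw [hC2, hvc, Finset.insert_inter_of_notMem (fun h => hvM (hM₂M h))]
            · -- clean nonblocker addition : mirror
              have hvC : v ∉ C := by
                intro h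
                by_cases hvM₁ : v ∈ M₁
                · exact hvM (hM₁M hvM₁)
                · by_cases hvM₂ : v ∈ M₂
                  · exact hvM (hM₂M hvM₂)
                  · exact hvIn (Finset.mem_sdiff.mp (hCeq ▸ Finset.mem_sdiff.mpr ⟨h, hvM⟩)).1
              have hCb : ∀ w ∈ C, w ∉ M₁ → w ∈ b := by
                intro w hw hwM₁
                by_cases hwM₂ : w ∈ M₂
                · exact (Finset.mem_inter.mp (hC2 ▸ Finset.mem_inter.mpr ⟨hw, hwM₂⟩)).1
                · have hwM : w ∉ M := by
                    intro h
                    rcases Finset.mem_union.mp (hpart ▸ h : w ∈ M₁ ∪ M₂) with h | h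
                    exacts [hwM₁ h, hwM₂ h]
                  exact (Finset.mem_sdiff.mp (hCeq ▸ Finset.mem_sdiff.mpr ⟨hw, hwM⟩)).1
              have hvnon : ∀ w ∈ C, ¬ G.Adj v w := by
                intro w hw
                by_cases hwM₁ : w ∈ M₁
                · exact fun h => hvblk ⟨w, hM₁M hwM₁, h⟩
                · exact hIc v (hvc ▸ Finset.mem_insert_self v b)
                    w (hvc ▸ Finset.mem_insert_of_mem (hCb w hw hwM₁))
              have hind' : IsIndep G (insert v C) := by
                intro x hx y hy
                rcases Finset.mem_insert.mp hx with hx' | hx'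
                · subst hx'
                  rcases Finset.mem_insert.mp hy with hy' | hy'
                  · subst hy'; exact fun h => G.irrefl h
                  · exact hvnon y hy'
                · rcases Finset.mem_insert.mp hy with hy' | hy'
                  · subst hy'; exact fun h => hvnon x hx' h.symm
                  · exact hCind x hx' y hy'
              have kC : k ≤ C.card := le_trans hkb (cardge b C hreachb hC1 hC2 hCeq)
              have hstep' : TarStep G k C (insert v C) :=
                ⟨hCind, hind', kC, le_trans kC (Finset.card_le_card (Finset.subset_insert v C)),
                  v, Or.inl rfl⟩
              have hvM₁ : v ∉ M₁ := fun h => hvM (hM₁M h)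
              have hvM₂ : v ∉ M₂ := fun h => hvM (hM₂M h)
              refine ⟨insert v C, Relation.ReflTransGen.tail hCreach hstep', ?_, ?_, Or.inr ?_⟩
              · rw [Finset.insert_inter_of_notMem hvM₁, hC1]
              · rw [Finset.insert_inter_of_notMem hvM₂, hC2, hvc,
                  Finset.insert_inter_of_notMem hvM₂]
              · rw [Finset.insert_sdiff_of_notMem C hvM, hCeq, hvc,
                  Finset.insert_sdiff_of_notMem b hvM]
    · -- removal : b = insert v c
      by_cases hvIn : v ∈ c
      · have hcb : b = c := by rw [hvb, Finset.insert_eq_self.mpr hvIn]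
        exact ⟨C, hCreach, hC1, hcb ▸ hC2, hcb ▸ hCd⟩
      · have hvb' : v ∈ b := hvb ▸ Finset.mem_insert_self v c
        by_cases hvM : v ∈ M
        · -- v ∈ M : b has no blockers, C is clean
          have hclean : ¬ ∃ z ∈ b, z ∉ M ∧ ∃ u ∈ M, G.Adj z u := by
            rintro ⟨z, hzb, hzM, u, huM, hadj⟩
            rcases hM z hzM with hall | hnone
            · exact hIb z hzb v hvb' (hall v hvM)
            · exact hnone u huM hadj
          have hCeq : C \ M = b \ M := hCd.resolve_left hclean
          by_cases hvM₁ : v ∈ M₁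
          · -- skip
            have hvM₂ : v ∉ M₂ := fun h => Finset.disjoint_left.mp hdisj hvM₁ h
            refine ⟨C, hCreach, hC1, ?_, Or.inr ?_⟩
            · rw [hC2, hvb, Finset.insert_inter_of_notMem hvM₂]
            · rw [hCeq, hvb, Finset.insert_sdiff_of_mem c hvM]
          · -- v ∈ M₂ : mirror removal
            have hvM₂ : v ∈ M₂ := by
              have : v ∈ M₁ ∪ M₂ := hpart ▸ hvM
              exact (Finset.mem_union.mp this).resolve_left hvM₁
            have hvC : v ∈ C := by
              have : v ∈ C ∩ M₂ := hC2 ▸ Finset.mem_inter.mpr ⟨hvb', hvM₂⟩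
              exact (Finset.mem_inter.mp this).1
            have e1 : C.erase v ∩ M₁ = B₁ ∩ M₁ := by
              rw [Finset.erase_inter, hC1,
                Finset.erase_eq_of_notMem
                  (fun h => Finset.disjoint_left.mp hdisj (Finset.mem_inter.mp h).2 hvM₂)]
            have e2 : C.erase v ∩ M₂ = c ∩ M₂ := by
              rw [Finset.erase_inter, hC2, hvb, Finset.insert_inter_of_mem hvM₂,
                Finset.erase_insert (fun h => hvIn (Finset.mem_inter.mp h).1)]
            have e3 : C.erase v \ M = c \ M := by
              rw [hcomm, hCeq, hvb, Finset.insert_sdiff_of_mem c hvM,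
                Finset.erase_eq_of_notMem (fun h => (Finset.mem_sdiff.mp h).2 hvM)]
            have kC' : k ≤ (C.erase v).card := le_trans hkc (cardge c (C.erase v) hreachc e1 e2 e3)
            have hstep' : TarStep G k C (C.erase v) :=
              ⟨hCind, indep_mono hCind (Finset.erase_subset v C),
                le_trans kC' (Finset.card_le_card (Finset.erase_subset v C)), kC',
                v, Or.inr (Finset.insert_erase hvC).symm⟩
            exact ⟨C.erase v, Relation.ReflTransGen.tail hCreach hstep', e1, e2, Or.inr e3⟩
        · -- v ∉ M
          rcases hCd with hblk | hCeq
          · -- was in blocker era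
            by_cases hcblk : ∃ z ∈ c, z ∉ M ∧ ∃ u ∈ M, G.Adj z u
            · -- blockers remain : freeze
              refine ⟨C, hCreach, hC1, ?_, Or.inl hcblk⟩
              rw [hC2, hvb, Finset.insert_inter_of_notMem (fun h => hvM (hM₂M h))]
            · -- era exit : rebuild
              obtain ⟨z, hzb, hzM, u, huM, hadj⟩ := hblk
              have hzall : ∀ w ∈ M, G.Adj z w := by
                rcases hM z hzM with hall | hnone
                · exact hall
                · exact absurd hadj (hnone u huM)
              have hbM : ∀ w ∈ M, w ∉ b := fun w hwM hwb => hIb z hzb w hwb (hzall w hwM)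
              have hcM : ∀ x ∈ c, x ∉ M := fun x hx hxM =>
                hbM x hxM (hvb ▸ Finset.mem_insert_of_mem hx)
              have hB₁ind : IsIndep G B₁ := indep_of_reach hA hB₁
              have hcnon : ∀ x ∈ c, ∀ y ∈ M, ¬ G.Adj x y := by
                intro x hx y hyM hadj'
                exact hcblk ⟨x, hx, hcM x hx, y, hyM, hadj'⟩
              have hind' : IsIndep G (c ∪ B₁ ∩ M₁) := by
                intro x hx y hy
                rcases Finset.mem_union.mp hx with hx | hx
                · rcases Finset.mem_union.mp hy with hy | hy
                  · exact hIc x hx y hy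
                  · exact hcnon x hx y (hM₁M (Finset.mem_inter.mp hy).2)
                · rcases Finset.mem_union.mp hy with hy | hy
                  · exact fun h => hcnon y hy x (hM₁M (Finset.mem_inter.mp hx).2) h.symm
                  · exact hB₁ind x (Finset.mem_inter.mp hx).1 y (Finset.mem_inter.mp hy).1
              have hreach' : TarReach G k A (c ∪ B₁ ∩ M₁) :=
                Relation.ReflTransGen.trans hreachc (reach_union (B₁ ∩ M₁) hind' hkc)
              have ecM₁ : c ∩ M₁ = ∅ := by
                rw [Finset.eq_empty_iff_forall_notMem]
                intro x hx
                exact hcM x (Finset.mem_inter.mp hx).1 (hM₁M (Finset.mem_inter.mp hx).2)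
              have ecM₂ : c ∩ M₂ = ∅ := by
                rw [Finset.eq_empty_iff_forall_notMem]
                intro x hx
                exact hcM x (Finset.mem_inter.mp hx).1 (hM₂M (Finset.mem_inter.mp hx).2)
              refine ⟨c ∪ B₁ ∩ M₁, hreach', ?_, ?_, Or.inr ?_⟩
              · rw [Finset.union_inter_distrib_right, ecM₁, Finset.inter_assoc,
                  Finset.inter_self, Finset.empty_union]
              · rw [Finset.union_inter_distrib_right, ecM₂, Finset.empty_union]
                rw [Finset.eq_empty_iff_forall_notMem] at ecM₂ ⊢
                intro x hx
                have hx' := Finset.mem_inter.mp hx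
                exact Finset.disjoint_left.mp hdisj (Finset.mem_inter.mp hx'.1).2 hx'.2
              · rw [Finset.union_sdiff_distrib,
                  Finset.sdiff_eq_empty_iff_subset.mpr
                    (le_trans Finset.inter_subset_right hM₁M), Finset.union_empty]
          · -- clean removal : mirror
            have hvC : v ∈ C := by
              have : v ∈ C \ M := hCeq ▸ Finset.mem_sdiff.mpr ⟨hvb', hvM⟩
              exact (Finset.mem_sdiff.mp this).1
            have hvM₁ : v ∉ M₁ := fun h => hvM (hM₁M h)
            have hvM₂ : v ∉ M₂ := fun h => hvM (hM₂M h)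
            have e1 : C.erase v ∩ M₁ = B₁ ∩ M₁ := by
              rw [Finset.erase_inter, hC1,
                Finset.erase_eq_of_notMem (fun h => hvM₁ (Finset.mem_inter.mp h).2)]
            have e2 : C.erase v ∩ M₂ = c ∩ M₂ := by
              rw [Finset.erase_inter, hC2, hvb, Finset.insert_inter_of_notMem hvM₂,
                Finset.erase_eq_of_notMem (fun h => hvIn (Finset.mem_inter.mp h).1)]
            have e3 : C.erase v \ M = c \ M := by
              rw [hcomm, hCeq, hvb, Finset.insert_sdiff_of_notMem c hvM,
                Finset.erase_insert (fun h => hvIn (Finset.mem_sdiff.mp h).1)]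
            have kC' : k ≤ (C.erase v).card := le_trans hkc (cardge c (C.erase v) hreachc e1 e2 e3)
            have hstep' : TarStep G k C (C.erase v) :=
              ⟨hCind, indep_mono hCind (Finset.erase_subset v C),
                le_trans kC' (Finset.card_le_card (Finset.erase_subset v C)), kC',
                v, Or.inr (Finset.insert_erase hvC).symm⟩
            exact ⟨C.erase v, Relation.ReflTransGen.tail hCreach hstep', e1, e2, Or.inr e3⟩
end

section
/- Let G be the complete join of graphs G_v and G_w, and let I be an independent set of G with I ∩ V(G_w) = ∅. Then for every ℓ ≥ 1 with ℓ ≤ |I|, the maximum size of an independent set of G that is TAR_ℓ-reachable from I equals the maximum size of an independent set of G_v that is TAR_ℓ-reachable (in G_v) from I. -/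
open Finset

variable {V : Type*}

/-- The maximum size of an independent set of `G` that is TAR_k-reachable from `I`. -/
noncomputable def RIS [DecidableEq V] (G : SimpleGraph V) (k : ℕ) (I : Finset V) : ℕ :=
  sSup {m | ∃ J : Finset V, TarReach G k I J ∧ J.card = m}

/-- The maximum size of an independent set TAR_k-reachable from `I` inside the
subgraph of `G` induced by `S`. -/
noncomputable def RISOn [DecidableEq V] (G : SimpleGraph V) (S : Finset V) (k : ℕ)
    (I : Finset V) : ℕ :=
  sSup {m | ∃ J : Finset V, TarReachOn G S k I J ∧ J.card = m}

/-- If `G` is the complete join of `G[S]` and `G[Sᶜ]` and the independent set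
`I` lies inside `S`, then for `1 ≤ ℓ ≤ |I|` the maximum size of an independent
set TAR_ℓ-reachable from `I` in `G` equals the one reachable inside `G[S]`. -/
theorem ris_join [Fintype V] [DecidableEq V] (G : SimpleGraph V) (S : Finset V)
    (hjoin : ∀ a ∈ S, ∀ b ∉ S, G.Adj a b)
    (I : Finset V) (hI : IsIndep G I) (hIS : I ⊆ S)
    (ℓ : ℕ) (hℓ1 : 1 ≤ ℓ) (hℓ : ℓ ≤ I.card) :
    RIS G ℓ I = RISOn G S ℓ I := by
  have key : ∀ J : Finset V, TarReach G ℓ I J → J ⊆ S ∧ TarReachOn G S ℓ I J := by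
    intro J h
    induction h with
    | refl => exact ⟨hIS, Relation.ReflTransGen.refl⟩
    | @tail b c hab hbc ih =>
      obtain ⟨hbS, hreach⟩ := ih
      obtain ⟨hbI, hcI, hb, hc, v, hv | hv⟩ := hbc
      · have hbne : b.Nonempty := Finset.card_pos.mp (lt_of_lt_of_le hℓ1 hb)
        have hvS : v ∈ S := by
          by_contra hvs
          obtain ⟨a, ha⟩ := hbne
          exact hcI v (hv ▸ Finset.mem_insert_self v b) a
            (hv ▸ Finset.mem_insert_of_mem ha) ((hjoin a (hbS ha) v hvs).symm)
        have hcS : c ⊆ S := by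
          subst hv; exact Finset.insert_subset hvS hbS
        exact ⟨hcS, hreach.tail ⟨hbS, hcS, hbI, hcI, hb, hc, v, Or.inl hv⟩⟩
      · have hcS : c ⊆ S := fun x hx => hbS (hv ▸ Finset.mem_insert_of_mem hx)
        exact ⟨hcS, hreach.tail ⟨hbS, hcS, hbI, hcI, hb, hc, v, Or.inr hv⟩⟩
  have hiff : ∀ J : Finset V, TarReach G ℓ I J ↔ TarReachOn G S ℓ I J := by
    intro J
    constructor
    · exact fun h => (key J h).2
    · exact fun h => Relation.ReflTransGen.mono (fun a b hs => hs.2.2) _ _ h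
  unfold RIS RISOn
  congr 1
  ext m
  simp only [Set.mem_setOf_eq, hiff]
end

section
/- Let G_u be the disjoint union of graphs G_v and G_w, let I be an independent set of G_u, and ℓ ≤ |I|. Then there is a unique maximum ℓ-stable tuple: among all ℓ-stable tuples (x', y'), there is one (x, y) with x ≥ x' and y ≥ y' for all ℓ-stable (x', y'). -/
open Finset

variable {V : Type*}

/-- `(x, y)` is an `ℓ`-stable tuple for the independent set `I` of the disjoint
union of the subgraphs induced by `S` and `Sᶜ`. -/
def StableTuple [Fintype V] [DecidableEq V] (G : SimpleGraph V) (S : Finset V)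
    (I : Finset V) (ℓ x y : ℕ) : Prop :=
  x ≤ (I ∩ S).card ∧ y ≤ (I ∩ Sᶜ).card ∧
  x = max 0 (ℓ - RISOn G Sᶜ y (I ∩ Sᶜ)) ∧ y = max 0 (ℓ - RISOn G S x (I ∩ S))

lemma bddRIS [DecidableEq V] [Fintype V] (G : SimpleGraph V) (S : Finset V) (k : ℕ)
    (I : Finset V) :
    BddAbove {m | ∃ J : Finset V, TarReachOn G S k I J ∧ J.card = m} :=
  ⟨Fintype.card V, fun m ⟨J, _, hJ⟩ => hJ ▸ J.card_le_univ⟩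

lemma self_le_RISOn [DecidableEq V] [Fintype V] (G : SimpleGraph V) (S : Finset V) (k : ℕ)
    (I : Finset V) : I.card ≤ RISOn G S k I :=
  le_csSup (bddRIS G S k I) ⟨I, Relation.ReflTransGen.refl, rfl⟩

lemma RISOn_anti [DecidableEq V] [Fintype V] (G : SimpleGraph V) (S : Finset V) {k k' : ℕ}
    (h : k ≤ k') (I : Finset V) : RISOn G S k' I ≤ RISOn G S k I := by
  have hne : {m | ∃ J : Finset V, TarReachOn G S k' I J ∧ J.card = m}.Nonempty :=
    ⟨I.card, I, Relation.ReflTransGen.refl, rfl⟩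
  apply csSup_le_csSup (bddRIS G S k I) hne
  rintro m ⟨J, hJ, rfl⟩
  have key : ∀ a b : Finset V, (a ⊆ S ∧ b ⊆ S ∧ TarStep G k' a b) →
      (a ⊆ S ∧ b ⊆ S ∧ TarStep G k a b) := fun a b hab =>
    ⟨hab.1, hab.2.1, hab.2.2.1, hab.2.2.2.1, h.trans hab.2.2.2.2.1,
      h.trans hab.2.2.2.2.2.1, hab.2.2.2.2.2.2⟩
  exact ⟨J, Relation.ReflTransGen.mono key _ _ hJ, rfl⟩

/-- There is a unique maximum `ℓ`-stable tuple: an `ℓ`-stable tuple dominating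
all `ℓ`-stable tuples coordinatewise. -/
theorem max_stable_exists [Fintype V] [DecidableEq V] (G : SimpleGraph V)
    (S : Finset V) (hsep : ∀ a ∈ S, ∀ b ∉ S, ¬ G.Adj a b)
    (I : Finset V) (hI : IsIndep G I) (ℓ : ℕ) (hℓ : ℓ ≤ I.card) :
    ∃ x y : ℕ, StableTuple G S I ℓ x y ∧
      ∀ x' y' : ℕ, StableTuple G S I ℓ x' y' → x' ≤ x ∧ y' ≤ y := by
  classical
  set f : ℕ → ℕ := fun y => ℓ - RISOn G Sᶜ y (I ∩ Sᶜ) with hf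
  set g : ℕ → ℕ := fun x => ℓ - RISOn G S x (I ∩ S) with hg
  have hfmono : Monotone f := fun y y' h =>
    Nat.sub_le_sub_left (RISOn_anti G Sᶜ h (I ∩ Sᶜ)) ℓ
  have hgmono : Monotone g := fun x x' h =>
    Nat.sub_le_sub_left (RISOn_anti G S h (I ∩ S)) ℓ
  have hcard : (I ∩ S).card + (I ∩ Sᶜ).card = I.card := by
    have h1 : I ∩ Sᶜ = I \ S := by ext a; simp [Finset.mem_sdiff]
    rw [h1]
    exact Finset.card_inter_add_card_sdiff I S
  have hfb : ∀ y, f y ≤ (I ∩ S).card := by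
    intro y
    have h1 : (I ∩ Sᶜ).card ≤ RISOn G Sᶜ y (I ∩ Sᶜ) := self_le_RISOn G Sᶜ y (I ∩ Sᶜ)
    calc f y ≤ ℓ - (I ∩ Sᶜ).card := Nat.sub_le_sub_left h1 ℓ
    _ ≤ (I ∩ S).card := by omega
  have hgb : ∀ x, g x ≤ (I ∩ Sᶜ).card := by
    intro x
    have h1 : (I ∩ S).card ≤ RISOn G S x (I ∩ S) := self_le_RISOn G S x (I ∩ S)
    calc g x ≤ ℓ - (I ∩ S).card := Nat.sub_le_sub_left h1 ℓ
    _ ≤ (I ∩ Sᶜ).card := by omega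
  -- Knaster–Tarski: greatest fixed point of f ∘ g
  set T : Set ℕ := {x | x ≤ f (g x)} with hT
  have hTb : BddAbove T := ⟨(I ∩ S).card, fun x hx => hx.trans (hfb _)⟩
  have hTne : T.Nonempty := ⟨0, Nat.zero_le _⟩
  set x₀ : ℕ := sSup T with hx0
  have hx0T : x₀ ∈ T := by
    apply csSup_le hTne
    intro x hx
    exact hx.trans (hfmono (hgmono (le_csSup hTb hx)))
  have hfix : f (g x₀) = x₀ := by
    have h1 : f (g x₀) ∈ T := hfmono (hgmono hx0T)
    exact le_antisymm (le_csSup hTb h1) hx0T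
  refine ⟨x₀, g x₀, ⟨hfix ▸ hfb _, hgb _, ?_, ?_⟩, ?_⟩
  · rw [Nat.zero_max]; exact hfix.symm
  · rw [Nat.zero_max]
  · rintro x' y' ⟨_, _, hx', hy'⟩
    simp only [Nat.zero_max] at hx' hy'
    have hgx : g x' = y' := hy'.symm
    have hfy : f y' = x' := hx'.symm
    have hx'T : x' ∈ T := by show x' ≤ f (g x'); rw [hgx, hfy]
    have h1 : x' ≤ x₀ := le_csSup hTb hx'T
    exact ⟨h1, hgx ▸ hgmono h1⟩
end

section
/- Let 𝒢 be a hereditary graph class, and let G be a graph that admits a cotree decomposition into 𝒢-graphs. Then every maximal cotree decomposition of G (one where all leaf graphs are indecomposable) is a cotree decomposition into 𝒢-graphs. -/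
universe u

open Finset

variable {V : Type u}

/-- The shape of a generalized cotree: leaves carry vertex sets, internal nodes
are union or join nodes. -/
inductive Cotree (V : Type u) : Type u where
  | leaf (S : Finset V) : Cotree V
  | union (l r : Cotree V) : Cotree V
  | join (l r : Cotree V) : Cotree V

/-- The vertex set associated with a node. -/
def Cotree.verts [DecidableEq V] : Cotree V → Finset V
  | .leaf S => S
  | .union l r => l.verts ∪ r.verts
  | .join l r => l.verts ∪ r.verts

/-- `t` is a generalized cotree decomposition with respect to `G`: leaves are
nonempty, children of every internal node have disjoint vertex sets, a union
node has no edges between its children, and a join node has all edges between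
its children. -/
def Cotree.WF [DecidableEq V] (G : SimpleGraph V) : Cotree V → Prop
  | .leaf S => S.Nonempty
  | .union l r => Disjoint l.verts r.verts ∧
      (∀ a ∈ l.verts, ∀ b ∈ r.verts, ¬ G.Adj a b) ∧ l.WF G ∧ r.WF G
  | .join l r => Disjoint l.verts r.verts ∧
      (∀ a ∈ l.verts, ∀ b ∈ r.verts, G.Adj a b) ∧ l.WF G ∧ r.WF G

/-- All leaf vertex sets satisfy `P`. -/
def Cotree.LeavesSat (P : Finset V → Prop) : Cotree V → Prop
  | .leaf S => P S
  | .union l r => l.LeavesSat P ∧ r.LeavesSat P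
  | .join l r => l.LeavesSat P ∧ r.LeavesSat P

/-- The vertex sets of all nodes of the cotree. -/
def Cotree.nodeSets [DecidableEq V] : Cotree V → Set (Finset V)
  | .leaf S => {S}
  | .union l r => insert (l.verts ∪ r.verts) (l.nodeSets ∪ r.nodeSets)
  | .join l r => insert (l.verts ∪ r.verts) (l.nodeSets ∪ r.nodeSets)

/-- The vertex sets of the leaves of the cotree. -/
def Cotree.leafSets : Cotree V → Set (Finset V)
  | .leaf S => {S}
  | .union l r => l.leafSets ∪ r.leafSets
  | .join l r => l.leafSets ∪ r.leafSets

/-- `G[S]` is indecomposable: both it and its complement are connected. -/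
def Indecomposable (G : SimpleGraph V) (S : Finset V) : Prop :=
  (G.induce (S : Set V)).Connected ∧ ((G.induce (S : Set V))ᶜ).Connected


section Aux

variable [DecidableEq V]

lemma reach_iff {W : Type u} {H : SimpleGraph W} (A : W → Prop)
    (hcross : ∀ x y, H.Adj x y → (A x ↔ A y)) {a b : W}
    (h : H.Reachable a b) : A a ↔ A b := by
  obtain ⟨w⟩ := h
  induction w with
  | nil => exact Iff.rfl
  | cons h p ih => exact (hcross _ _ h).trans ih

lemma Cotree.leavesSat_iff (P : Finset V → Prop) (t : Cotree V) :
    t.LeavesSat P ↔ ∀ S ∈ t.leafSets, P S := by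
  induction t with
  | leaf T => simp [Cotree.LeavesSat, Cotree.leafSets]
  | union l r ihl ihr =>
      simp only [Cotree.LeavesSat, Cotree.leafSets, ihl, ihr, Set.mem_union, or_imp,
        forall_and]
  | join l r ihl ihr =>
      simp only [Cotree.LeavesSat, Cotree.leafSets, ihl, ihr, Set.mem_union, or_imp,
        forall_and]

lemma Cotree.subset_side (G : SimpleGraph V) (S A B : Finset V)
    (hS : ∀ x ∈ S, x ∈ A ∪ B) (hdisj : Disjoint A B)
    {H : SimpleGraph ((S : Set V) : Type u)}
    (hcross : ∀ x y : (S : Set V), H.Adj x y → ¬ ((x : V) ∈ A ∧ (y : V) ∈ B))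
    (hconn : H.Connected) :
    (∀ x ∈ S, x ∈ A) ∨ (∀ x ∈ S, x ∈ B) := by
  have hside : ∀ x y : (S : Set V), H.Adj x y → (((x : V) ∈ A) ↔ ((y : V) ∈ A)) := by
    intro x y hxy
    have hy := hS y (Finset.mem_coe.mp y.2)
    have hx := hS x (Finset.mem_coe.mp x.2)
    constructor
    · intro hxa
      rcases Finset.mem_union.mp hy with h' | h'
      · exact h'
      · exact absurd ⟨hxa, h'⟩ (hcross x y hxy)
    · intro hya
      rcases Finset.mem_union.mp hx with h' | h'
      · exact h'
      · exact absurd ⟨hya, h'⟩ (hcross y x hxy.symm)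
  obtain ⟨a⟩ := hconn.nonempty
  by_cases ha : (a : V) ∈ A
  · left
    intro x hx
    exact (reach_iff (fun z : (S : Set V) => (z : V) ∈ A) hside
      (hconn.preconnected a ⟨x, Finset.mem_coe.mpr hx⟩)).mp ha
  · right
    intro x hx
    have hxiff := reach_iff (fun z : (S : Set V) => (z : V) ∈ A) hside
      (hconn.preconnected a ⟨x, Finset.mem_coe.mpr hx⟩)
    have hxA : x ∉ A := fun h => ha (hxiff.mpr h)
    rcases Finset.mem_union.mp (hS x hx) with h' | h'
    · exact absurd h' hxA
    · exact h'

lemma Cotree.exists_leaf (G : SimpleGraph V) (t : Cotree V) (hwf : t.WF G)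
    (S : Finset V) (hS : S ⊆ t.verts) (hind : Indecomposable G S) :
    ∃ T ∈ t.leafSets, S ⊆ T := by
  induction t with
  | leaf T => exact ⟨T, rfl, hS⟩
  | union l r ihl ihr =>
      obtain ⟨hdisj, hno, hl, hr⟩ := hwf
      have hS' : ∀ x ∈ S, x ∈ l.verts ∪ r.verts := fun x hx => hS hx
      have hcross : ∀ x y : (S : Set V), (G.induce (S : Set V)).Adj x y →
          ¬ ((x : V) ∈ l.verts ∧ (y : V) ∈ r.verts) := by
        intro x y hxy ⟨hxl, hyr⟩
        exact hno _ hxl _ hyr hxy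
      rcases Cotree.subset_side G S l.verts r.verts hS' hdisj hcross hind.1 with hk | hk
      · obtain ⟨T, hT, hST⟩ := ihl hl (fun x hx => hk x hx)
        exact ⟨T, Or.inl hT, hST⟩
      · obtain ⟨T, hT, hST⟩ := ihr hr (fun x hx => hk x hx)
        exact ⟨T, Or.inr hT, hST⟩
  | join l r ihl ihr =>
      obtain ⟨hdisj, hall, hl, hr⟩ := hwf
      have hS' : ∀ x ∈ S, x ∈ l.verts ∪ r.verts := fun x hx => hS hx
      have hcross : ∀ x y : (S : Set V), ((G.induce (S : Set V))ᶜ).Adj x y →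
          ¬ ((x : V) ∈ l.verts ∧ (y : V) ∈ r.verts) := by
        intro x y hxy ⟨hxl, hyr⟩
        exact ((SimpleGraph.compl_adj _ _ _).mp hxy).2 (hall _ hxl _ hyr)
      rcases Cotree.subset_side G S l.verts r.verts hS' hdisj hcross hind.2 with hk | hk
      · obtain ⟨T, hT, hST⟩ := ihl hl (fun x hx => hk x hx)
        exact ⟨T, Or.inl hT, hST⟩
      · obtain ⟨T, hT, hST⟩ := ihr hr (fun x hx => hk x hx)
        exact ⟨T, Or.inr hT, hST⟩

end Aux

/-- If `G` admits a cotree decomposition into graphs of a hereditary class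
(described by the predicate `P` on induced-subgraph vertex sets), then every
maximal cotree decomposition of `G` is a decomposition into such graphs. -/
theorem maximal_cotree_hereditary [Fintype V] [DecidableEq V] (G : SimpleGraph V)
    (P : Finset V → Prop) (hP : ∀ S T : Finset V, T ⊆ S → P S → P T)
    (h : ∃ t : Cotree V, t.WF G ∧ t.verts = Finset.univ ∧ t.LeavesSat P)
    (t' : Cotree V) (ht' : t'.WF G) (hverts : t'.verts = Finset.univ)
    (hmax : t'.LeavesSat (Indecomposable G)) :
    t'.LeavesSat P := by
  obtain ⟨t, hwf, htverts, hsat⟩ := h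
  rw [Cotree.leavesSat_iff]
  intro S hSleaf
  have hind : Indecomposable G S := (Cotree.leavesSat_iff _ t').mp hmax S hSleaf
  have hsub : S ⊆ t.verts := htverts ▸ Finset.subset_univ S
  obtain ⟨T, hT, hST⟩ := Cotree.exists_leaf G t hwf S hsub hind
  exact hP T S hST ((Cotree.leavesSat_iff _ t).mp hsat T hT)
end
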